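/- Let H be a hypergraph with an ordering v_1,…,v_n of its vertices, let i ∈ {0,…,n−1}, and let T* be a minimal transversal of H_i. Combining the two cases: either T* is a minimal transversal of H_{i+1}, or T* ∪ {v_{i+1}} is a minimal transversal of H_{i+1}. In particular, every minimal transversal of H_i extends to a minimal transversal of H_{i+1} by adding at most the vertex v_{i+1}. -/

import Mathlib

/-- `T` is a transversal of the induced hypergraph `H[S]`, where the ambient
hypergraph has edge family `E`: `T ⊆ S` and `T` meets every edge of `E` that is
contained in `S`. -/
def IsTransversal {α : Type*} [DecidableEq α]
    (E : Finset (Finset α)) (S T : Finset α) : Prop :=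
  T ⊆ S ∧ ∀ e ∈ E, e ⊆ S → (e ∩ T).Nonempty

/-- `T` is a minimal transversal of `H[S]`: it is a transversal and no proper
subset of it is a transversal. -/
def IsMinTransversal {α : Type*} [DecidableEq α]
    (E : Finset (Finset α)) (S T : Finset α) : Prop :=
  IsTransversal E S T ∧ ∀ T' ⊂ T, ¬ IsTransversal E S T'

/-- Let `H` be a hypergraph with an ordering `v 0, …, v (n-1)` of its vertices, let
`i ∈ {0,…,n-1}`, and let `T*` be a minimal transversal of `H_i = H[{v 0,…,v (i-1)}]`.
Then either `T*` is a minimal transversal of `H_{i+1} = H[{v 0,…,v i}]`, or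
`T* ∪ {v i}` is a minimal transversal of `H_{i+1}`; in particular every minimal
transversal of `H_i` extends to one of `H_{i+1}` by adding at most the vertex `v i`. -/
theorem minTransversal_extends
    {α : Type*} [DecidableEq α] {n : ℕ} (V : Finset α) (E : Finset (Finset α))
    (hE : ∀ e ∈ E, e ⊆ V)
    (v : Fin n → α) (hinj : Function.Injective v) (hV : V = Finset.univ.image v)
    (i : Fin n) (Tstar : Finset α)
    (hT : IsMinTransversal E ((Finset.Iio i).image v) Tstar) :
    IsMinTransversal E ((Finset.Iic i).image v) Tstar ∨
      IsMinTransversal E ((Finset.Iic i).image v) (insert (v i) Tstar) := by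
  classical
  set Si := (Finset.Iio i).image v with hSi
  set S := (Finset.Iic i).image v with hS
  obtain ⟨⟨hTsub, hTmeet⟩, hTmin⟩ := hT
  have hsub : Si ⊆ S := Finset.image_subset_image (fun j hj => by
    simp only [Finset.mem_Iio, Finset.mem_Iic] at *; exact le_of_lt hj)
  have hviS : v i ∈ S := Finset.mem_image_of_mem v (by simp)
  have hSeq : S = insert (v i) Si := by
    ext x
    simp only [hS, hSi, Finset.mem_insert, Finset.mem_image, Finset.mem_Iic,
      Finset.mem_Iio]
    constructor
    · rintro ⟨j, hj, rfl⟩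
      rcases lt_or_eq_of_le hj with h | h
      · exact Or.inr ⟨j, h, rfl⟩
      · exact Or.inl (by rw [h])
    · rintro (rfl | ⟨j, hj, rfl⟩)
      · exact ⟨i, le_refl _, rfl⟩
      · exact ⟨j, le_of_lt hj, rfl⟩
  have hviSi : v i ∉ Si := by
    simp only [hSi, Finset.mem_image, Finset.mem_Iio]
    rintro ⟨j, hj, hjeq⟩
    exact absurd (hinj hjeq) (ne_of_lt hj)
  have hviT : v i ∉ Tstar := fun h => hviSi (hTsub h)
  by_cases hcase : ∀ e ∈ E, e ⊆ S → (e ∩ Tstar).Nonempty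
  · left
    refine ⟨⟨hTsub.trans hsub, hcase⟩, ?_⟩
    intro T' hT' ⟨hT'sub, hT'meet⟩
    refine hTmin T' hT' ⟨(hT'.subset).trans hTsub, fun e he heS => ?_⟩
    exact hT'meet e he (heS.trans hsub)
  · right
    push_neg at hcase
    obtain ⟨e0, he0E, he0S, he0T⟩ := hcase
    have hvie0 : v i ∈ e0 := by
      by_contra hvi
      have he0Si : e0 ⊆ Si := by
        intro x hx
        have := he0S hx
        rw [hSeq, Finset.mem_insert] at this
        rcases this with rfl | h
        · exact absurd hx hvi
        · exact h
      obtain ⟨x, hx⟩ := hTmeet e0 he0E he0Si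
      simp [he0T] at hx
    constructor
    · refine ⟨Finset.insert_subset hviS (hTsub.trans hsub), fun e he heS => ?_⟩
      by_cases hvie : v i ∈ e
      · exact ⟨v i, Finset.mem_inter.2 ⟨hvie, Finset.mem_insert_self _ _⟩⟩
      · have heSi : e ⊆ Si := by
          intro x hx
          have := heS hx
          rw [hSeq, Finset.mem_insert] at this
          rcases this with rfl | h
          · exact absurd hx hvie
          · exact h
        obtain ⟨x, hx⟩ := hTmeet e he heSi
        rw [Finset.mem_inter] at hx
        exact ⟨x, Finset.mem_inter.2 ⟨hx.1, Finset.mem_insert_of_mem hx.2⟩⟩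
    · intro T' hT' ⟨hT'sub, hT'meet⟩
      by_cases hviT' : v i ∈ T'
      · -- T'.erase (v i) ⊂ Tstar
        have herase : T'.erase (v i) ⊂ Tstar := by
          constructor
          · intro x hx
            rw [Finset.mem_erase] at hx
            rcases Finset.mem_insert.1 (hT'.subset hx.2) with h | h
            · exact absurd h hx.1
            · exact h
          · intro hc
            apply hT'.not_subset
            intro x hx
            rcases Finset.mem_insert.1 hx with rfl | h
            · exact hviT'
            · exact Finset.mem_of_mem_erase (hc h)
        have := hTmin _ herase
        apply this
        refine ⟨(herase.subset).trans hTsub, fun e he heSi => ?_⟩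
        obtain ⟨x, hx⟩ := hT'meet e he (heSi.trans hsub)
        rw [Finset.mem_inter] at hx
        have hxvi : x ≠ v i := by
          rintro rfl
          exact hviSi (heSi hx.1)
        exact ⟨x, Finset.mem_inter.2 ⟨hx.1, Finset.mem_erase.2 ⟨hxvi, hx.2⟩⟩⟩
      · -- T' ⊆ Tstar, misses e0
        have hT'T : T' ⊆ Tstar := fun x hx => by
          rcases Finset.mem_insert.1 (hT'.subset hx) with rfl | h
          · exact absurd hx hviT'
          · exact h
        obtain ⟨x, hx⟩ := hT'meet e0 he0E he0S
        rw [Finset.mem_inter] at hx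
        have : x ∈ e0 ∩ Tstar := Finset.mem_inter.2 ⟨hx.1, hT'T hx.2⟩
        simp [he0T] at this
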